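/- arXiv:1312.2138 — 3 statements merged into one kernel-verified Lean document; each statement's English description precedes it below -/
import Mathlib

section
/- Let f : [0,∞) → [0,∞) and α : [0,1] → (0,∞) be continuous functions with f(0) = 0, and set F(ξ) = ∫₀^ξ f(t) dt. Suppose there exist b, c > 0 such that F(ξ) = c ξ² for all ξ ∈ (0,b]. Then there exists r > 0 such that there is NO nonempty open interval I ⊆ (0,∞) with the property that for every λ ∈ I there is a twice continuously differentiable function u : [0,1] → ℝ satisfying −u''(t) = λ α(t) f(u(t)) on [0,1], u > 0 on (0,1), u(0) = u(1) = 0, and ∫₀¹ |u'(t)|² dt < r. -/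
open Set MeasureTheory

lemma ftc01 (g g' : ℝ → ℝ)
    (hg : ∀ t ∈ Icc (0:ℝ) 1, HasDerivWithinAt g (g' t) (Icc 0 1) t)
    (hint : IntervalIntegrable g' volume 0 1) {t : ℝ} (ht : t ∈ Icc (0:ℝ) 1) :
    ∫ s in (0:ℝ)..t, g' s = g t - g 0 := by
  apply intervalIntegral.integral_eq_sub_of_hasDeriv_right_of_le ht.1
  · exact fun x hx =>
      ((hg x ⟨hx.1, hx.2.trans ht.2⟩).continuousWithinAt).mono (Icc_subset_Icc le_rfl ht.2)
  · intro x hx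
    exact ((hg x ⟨hx.1.le, (hx.2.trans_le ht.2).le⟩).hasDerivAt
      (Icc_mem_nhds hx.1 (hx.2.trans_le ht.2))).hasDerivWithinAt
  · refine hint.mono_set ?_
    rw [uIcc_of_le ht.1, uIcc_of_le zero_le_one]
    exact Icc_subset_Icc le_rfl ht.2

lemma cs01 (g : ℝ → ℝ) (h1 : IntervalIntegrable (fun t => |g t|) volume 0 1)
    (h2 : IntervalIntegrable (fun t => |g t| ^ 2) volume 0 1) :
    (∫ t in (0:ℝ)..1, |g t|) ^ 2 ≤ ∫ t in (0:ℝ)..1, |g t| ^ 2 := by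
  set m := ∫ t in (0:ℝ)..1, |g t| with hm
  have key : 0 ≤ ∫ t in (0:ℝ)..1, (|g t| - m) ^ 2 :=
    intervalIntegral.integral_nonneg zero_le_one (fun u _ => sq_nonneg _)
  have expand : EqOn (fun t => (|g t| - m)^2) (fun t => |g t|^2 - (2*m)*|g t| + m^2) (uIcc (0:ℝ) 1) :=
    fun t _ => by ring
  rw [intervalIntegral.integral_congr expand,
      intervalIntegral.integral_add (h2.sub (h1.const_mul (2*m))) intervalIntegrable_const,
      intervalIntegral.integral_sub h2 (h1.const_mul (2*m)),
      intervalIntegral.integral_const_mul, intervalIntegral.integral_const] at key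
  simp only [smul_eq_mul] at key
  nlinarith [key]

lemma intInt01 {g : ℝ → ℝ} (h : ContinuousOn g (Icc 0 1)) : IntervalIntegrable g volume 0 1 := by
  apply ContinuousOn.intervalIntegrable
  rwa [uIcc_of_le zero_le_one]

lemma intInt0t {g : ℝ → ℝ} (h : ContinuousOn g (Icc 0 1)) {t : ℝ} (ht : t ∈ Icc (0:ℝ) 1) :
    IntervalIntegrable g volume 0 t := by
  apply ContinuousOn.intervalIntegrable
  rw [uIcc_of_le ht.1]; exact h.mono (Icc_subset_Icc le_rfl ht.2)

lemma f_lin (f F : ℝ → ℝ) (hf_cont : ContinuousOn f (Ici 0)) (hf0 : f 0 = 0)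
    (hF : ∀ ξ, F ξ = ∫ t in (0:ℝ)..ξ, f t) (b c : ℝ)
    (hconst : ∀ ξ ∈ Ioc (0:ℝ) b, F ξ = c * ξ ^ 2)
    {ξ : ℝ} (h0 : 0 ≤ ξ) (hξb : ξ < b) : f ξ = 2 * c * ξ := by
  rcases eq_or_lt_of_le h0 with h | h
  · rw [← h, hf0]; ring
  · have hint : IntervalIntegrable f volume 0 ξ := by
      apply ContinuousOn.intervalIntegrable
      rw [uIcc_of_le h.le]
      exact hf_cont.mono Icc_subset_Ici_self
    have hmeas : StronglyMeasurableAtFilter f (nhds ξ) volume :=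
      (hf_cont.mono Ioi_subset_Ici_self).stronglyMeasurableAtFilter isOpen_Ioi ξ h
    have hca : ContinuousAt f ξ := hf_cont.continuousAt (Ici_mem_nhds h)
    have h1 : HasDerivAt F (f ξ) ξ := by
      have hFe : F = fun x => ∫ t in (0:ℝ)..x, f t := funext hF
      rw [hFe]
      exact intervalIntegral.integral_hasDerivAt_right hint hmeas hca
    have h2 : HasDerivAt F (2 * c * ξ) ξ := by
      have hev : F =ᶠ[nhds ξ] fun x => c * x ^ 2 :=
        Filter.eventuallyEq_of_mem (Ioo_mem_nhds h hξb) (fun x hx => hconst x ⟨hx.1, hx.2.le⟩)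
      have hd : HasDerivAt (fun x => c * x ^ 2) (2 * c * ξ) ξ := by
        have : HasDerivAt (fun x => c * x ^ 2) (c * (((2:ℕ):ℝ) * ξ ^ (2 - 1))) ξ :=
          (hasDerivAt_pow 2 ξ).const_mul c
        convert this using 1
        simp; ring
      exact hd.congr_of_eventuallyEq hev
    exact h1.unique h2

theorem stmt2
    (f α : ℝ → ℝ)
    (hf_cont : ContinuousOn f (Ici 0))
    (hf_nonneg : ∀ ξ ∈ Ici (0:ℝ), 0 ≤ f ξ)
    (hf0 : f 0 = 0)
    (hα_cont : ContinuousOn α (Icc 0 1))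
    (hα_pos : ∀ t ∈ Icc (0:ℝ) 1, 0 < α t)
    (F : ℝ → ℝ) (hF : ∀ ξ, F ξ = ∫ t in (0:ℝ)..ξ, f t)
    (b c : ℝ) (hb : 0 < b) (hc : 0 < c)
    (hconst : ∀ ξ ∈ Ioc (0:ℝ) b, F ξ = c * ξ ^ 2) :
    ∃ r > (0:ℝ), ¬ ∃ p q : ℝ, 0 ≤ p ∧ p < q ∧ ∀ lam ∈ Ioo p q,
      ∃ u d d2 : ℝ → ℝ,
        (∀ t ∈ Icc (0:ℝ) 1, HasDerivWithinAt u (d t) (Icc 0 1) t) ∧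
        (∀ t ∈ Icc (0:ℝ) 1, HasDerivWithinAt d (d2 t) (Icc 0 1) t) ∧
        ContinuousOn d2 (Icc 0 1) ∧
        (∀ t ∈ Icc (0:ℝ) 1, -d2 t = lam * α t * f (u t)) ∧
        (∀ t ∈ Ioo (0:ℝ) 1, 0 < u t) ∧
        u 0 = 0 ∧ u 1 = 0 ∧
        (∫ t in (0:ℝ)..1, |d t| ^ 2) < r := by
  refine ⟨b ^ 2, by positivity, ?_⟩
  rintro ⟨p, q, hp, hpq, h⟩
  have hL1 : (2*p+q)/3 ∈ Ioo p q := ⟨by linarith, by linarith⟩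
  have hL2 : (p+2*q)/3 ∈ Ioo p q := ⟨by linarith, by linarith⟩
  have hL12 : (2*p+q)/3 < (p+2*q)/3 := by linarith
  obtain ⟨u₁, d₁, e₁, hu₁, hd₁, he₁, hode₁, hpos₁, ha₁, hb₁, hen₁⟩ := h _ hL1
  obtain ⟨u₂, d₂, e₂, hu₂, hd₂, he₂, hode₂, hpos₂, ha₂, hb₂, hen₂⟩ := h _ hL2
  -- linearization of the ODE for small-energy solutions
  have lin : ∀ (lam : ℝ) (u d d2 : ℝ → ℝ),
      (∀ t ∈ Icc (0:ℝ) 1, HasDerivWithinAt u (d t) (Icc 0 1) t) →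
      (∀ t ∈ Icc (0:ℝ) 1, HasDerivWithinAt d (d2 t) (Icc 0 1) t) →
      (∀ t ∈ Icc (0:ℝ) 1, -d2 t = lam * α t * f (u t)) →
      (∀ t ∈ Ioo (0:ℝ) 1, 0 < u t) → u 0 = 0 → u 1 = 0 →
      (∫ t in (0:ℝ)..1, |d t| ^ 2) < b ^ 2 →
      ∀ t ∈ Icc (0:ℝ) 1, -d2 t = lam * α t * (2 * c * u t) := by
    intro lam u d d2 hu hd hode hpos h0 h1 hen t ht
    have dcont : ContinuousOn d (Icc 0 1) := fun x hx => (hd x hx).continuousWithinAt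
    have habs : IntervalIntegrable (fun s => |d s|) volume 0 1 := intInt01 dcont.abs
    have habs2 : IntervalIntegrable (fun s => |d s| ^ 2) volume 0 1 := intInt01 (dcont.abs.pow 2)
    have hm : (∫ s in (0:ℝ)..1, |d s|) < b := by
      have hcs := cs01 d habs habs2
      have hmn : 0 ≤ ∫ s in (0:ℝ)..1, |d s| :=
        intervalIntegral.integral_nonneg zero_le_one (fun _ _ => abs_nonneg _)
      nlinarith
    have hrep : u t = ∫ x in (0:ℝ)..t, d x := by
      have := ftc01 u d hu (intInt01 dcont) ht
      rw [h0] at this; linarith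
    have hub : u t < b := by
      rw [hrep]
      have hint_t : IntervalIntegrable d volume 0 t := intInt0t dcont ht
      have hint_abst : IntervalIntegrable (fun s => |d s|) volume 0 t := intInt0t dcont.abs ht
      have hint_t1 : IntervalIntegrable (fun s => |d s|) volume t 1 := by
        apply ContinuousOn.intervalIntegrable
        rw [uIcc_of_le ht.2]
        exact dcont.abs.mono (Icc_subset_Icc ht.1 le_rfl)
      have e1 : (∫ x in (0:ℝ)..t, d x) ≤ ∫ x in (0:ℝ)..t, |d x| :=
        intervalIntegral.integral_mono_on ht.1 hint_t hint_abst (fun x _ => le_abs_self _)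
      have hsplit := intervalIntegral.integral_add_adjacent_intervals hint_abst hint_t1
      have e3 : 0 ≤ ∫ x in t..1, |d x| :=
        intervalIntegral.integral_nonneg ht.2 (fun _ _ => abs_nonneg _)
      linarith
    have hun : 0 ≤ u t := by
      rcases eq_or_lt_of_le ht.1 with h' | h'
      · rw [← h', h0]
      · rcases eq_or_lt_of_le ht.2 with h'' | h''
        · rw [h'', h1]
        · exact (hpos t ⟨h', h''⟩).le
    rw [hode t ht, f_lin f F hf_cont hf0 hF b c hconst hun hub]
  have key₁ := lin _ u₁ d₁ e₁ hu₁ hd₁ hode₁ hpos₁ ha₁ hb₁ hen₁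
  have key₂ := lin _ u₂ d₂ e₂ hu₂ hd₂ hode₂ hpos₂ ha₂ hb₂ hen₂
  -- Wronskian argument
  have u₁cont : ContinuousOn u₁ (Icc 0 1) := fun x hx => (hu₁ x hx).continuousWithinAt
  have u₂cont : ContinuousOn u₂ (Icc 0 1) := fun x hx => (hu₂ x hx).continuousWithinAt
  have d₁cont : ContinuousOn d₁ (Icc 0 1) := fun x hx => (hd₁ x hx).continuousWithinAt
  have d₂cont : ContinuousOn d₂ (Icc 0 1) := fun x hx => (hd₂ x hx).continuousWithinAt
  have hW : ∀ t ∈ Icc (0:ℝ) 1, HasDerivWithinAt (fun s => d₁ s * u₂ s - u₁ s * d₂ s)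
      ((e₁ t * u₂ t + d₁ t * d₂ t) - (d₁ t * d₂ t + u₁ t * e₂ t)) (Icc 0 1) t :=
    fun t ht => ((hd₁ t ht).mul (hu₂ t ht)).sub ((hu₁ t ht).mul (hd₂ t ht))
  have hWcont : ContinuousOn (fun s => (e₁ s * u₂ s + d₁ s * d₂ s) - (d₁ s * d₂ s + u₁ s * e₂ s))
      (Icc 0 1) := ((he₁.mul u₂cont).add (d₁cont.mul d₂cont)).sub
        ((d₁cont.mul d₂cont).add (u₁cont.mul he₂))
  have hWint := intInt01 hWcont
  have hFTC := ftc01 _ _ hW hWint (right_mem_Icc.mpr zero_le_one)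
  have hWval : (∫ s in (0:ℝ)..1,
      ((e₁ s * u₂ s + d₁ s * d₂ s) - (d₁ s * d₂ s + u₁ s * e₂ s))) = 0 := by
    rw [hFTC]; simp [ha₁, hb₁, ha₂, hb₂]
  have hpos_int : 0 < ∫ s in (0:ℝ)..1,
      ((e₁ s * u₂ s + d₁ s * d₂ s) - (d₁ s * d₂ s + u₁ s * e₂ s)) := by
    have hEq : EqOn (fun s => (e₁ s * u₂ s + d₁ s * d₂ s) - (d₁ s * d₂ s + u₁ s * e₂ s))
        (fun s => 2 * c * ((p+2*q)/3 - (2*p+q)/3) * (α s * (u₁ s * u₂ s))) (uIcc (0:ℝ) 1) := by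
      rw [uIcc_of_le zero_le_one]
      intro s hs
      have e1 := key₁ s hs
      have e2 := key₂ s hs
      dsimp only
      linear_combination (u₁ s) * e2 - (u₂ s) * e1
    rw [intervalIntegral.integral_congr hEq]
    apply intervalIntegral.intervalIntegral_pos_of_pos_on
    · exact intInt01 (continuousOn_const.mul (hα_cont.mul (u₁cont.mul u₂cont)))
    · intro x hx
      have hx' : x ∈ Icc (0:ℝ) 1 := Ioo_subset_Icc_self hx
      exact mul_pos (mul_pos (by linarith) (by linarith))
        (mul_pos (hα_pos x hx') (mul_pos (hpos₁ x hx) (hpos₂ x hx)))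
    · exact zero_lt_one
  linarith
end

section
/- Let X be a real Hilbert space, and for r > 0 let B_r = {x ∈ X : ‖x‖² ≤ r}. Let J : X → ℝ be sequentially weakly upper semicontinuous (for every sequence (x_n) converging weakly to x in X, limsup J(x_n) ≤ J(x)) and Gâteaux differentiable, with Gâteaux derivative represented by a map J' : X → X (i.e., for every x, v ∈ X, the directional derivative of J at x in direction v equals ⟨J'(x), v⟩), and assume J(0) = 0. Suppose that for some r > 0 there exists x̂ ∈ B_r which is a global maximum of the restriction of J to B_r and which satisfies ⟨J'(x̂), x̂⟩ < 2 J(x̂). Then there exists a nonempty open interval I ⊆ (0,∞) such that for every λ ∈ I the equation x = λ J'(x) has a solution x ≠ 0 with ‖x‖² < r. -/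
open Set Filter
open scoped RealInnerProductSpace
open Topology


lemma neg_deriv_lemma {f : ℝ → ℝ} {c : ℝ} (hf : HasDerivAt f c 1) (hc : c < 0) :
    ∃ t ∈ Ioo (0:ℝ) 1, f 1 < f t := by
  have hs : Tendsto (slope f 1) (𝓝[≠] 1) (𝓝 c) := hasDerivAt_iff_tendsto_slope.1 hf
  have hmono : 𝓝[Ioo (0:ℝ) 1] (1:ℝ) ≤ 𝓝[≠] (1:ℝ) :=
    nhdsWithin_mono _ (fun x hx => ne_of_lt hx.2)
  have hne : (𝓝[Ioo (0:ℝ) 1] (1:ℝ)).NeBot := by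
    apply mem_closure_iff_nhdsWithin_neBot.1
    rw [closure_Ioo (by norm_num : (0:ℝ) ≠ 1)]
    exact ⟨by norm_num, le_refl 1⟩
  have hev : ∀ᶠ t in 𝓝[Ioo (0:ℝ) 1] (1:ℝ), slope f 1 t < 0 :=
    (hs.mono_left hmono).eventually_lt_const hc
  obtain ⟨t, hts, htI⟩ := (hev.and self_mem_nhdsWithin).exists
  refine ⟨t, htI, ?_⟩
  rw [slope_def_field] at hts
  have h1 : t - 1 < 0 := by linarith [htI.2]
  have := div_neg_iff.1 hts
  rcases this with ⟨h, h'⟩ | ⟨h, h'⟩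
  · linarith
  · linarith


lemma weak_seq_compact {X : Type*} [NormedAddCommGroup X] [InnerProductSpace ℝ X]
    [CompleteSpace X] (C : ℝ) (u : ℕ → X) (hb : ∀ n, ‖u n‖ ≤ C) :
    ∃ (x : X) (φ : ℕ → ℕ), StrictMono φ ∧
      ∀ v : X, Tendsto (fun k => ⟪u (φ k), v⟫) atTop (𝓝 ⟪x, v⟫) := by
  have hC : 0 ≤ C := le_trans (norm_nonneg (u 0)) (hb 0)
  set Y : Submodule ℝ X := (Submodule.span ℝ (Set.range u)).topologicalClosure with hY
  haveI : CompleteSpace Y := (Submodule.isClosed_topologicalClosure _).completeSpace_coe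
  have huY : ∀ n, u n ∈ Y :=
    fun n => (Submodule.span ℝ (Set.range u)).le_topologicalClosure
      (Submodule.subset_span (mem_range_self n))
  -- separability
  have hsep : TopologicalSpace.IsSeparable (Y : Set X) := by
    have := ((Set.countable_range u).isSeparable.span (R := ℝ)).closure
    simpa [hY, Submodule.topologicalClosure_coe] using this
  obtain ⟨c, hcc, hcs⟩ := hsep
  have hcne : c.Nonempty := by
    rcases Set.eq_empty_or_nonempty c with h | h
    · exfalso
      have : (0 : X) ∈ closure c := hcs (Submodule.zero_mem Y)
      simp [h] at this
    · exact h
  obtain ⟨d, hd⟩ := hcc.exists_eq_range hcne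
  -- diagonal via compactness of product
  have hmem : ∀ n, (fun m => ⟪u n, d m⟫) ∈ Set.pi univ (fun m => Icc (-(C * ‖d m‖)) (C * ‖d m‖)) := by
    intro n
    intro m _
    have h1 : |⟪u n, d m⟫| ≤ ‖u n‖ * ‖d m‖ := abs_real_inner_le_norm _ _
    have h2 : ‖u n‖ * ‖d m‖ ≤ C * ‖d m‖ :=
      mul_le_mul_of_nonneg_right (hb n) (norm_nonneg _)
    exact abs_le.1 (le_trans h1 h2)
  have hcomp : IsCompact (Set.pi univ (fun m : ℕ => Icc (-(C * ‖d m‖)) (C * ‖d m‖))) :=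
    isCompact_univ_pi (fun m => isCompact_Icc)
  obtain ⟨g, -, φ, hφ, hg⟩ := hcomp.isSeqCompact hmem
  have hdm : ∀ m, Tendsto (fun k => ⟪u (φ k), d m⟫) atTop (𝓝 (g m)) := by
    intro m
    exact (tendsto_pi_nhds.1 hg) m
  -- Cauchy for every v
  have hcauchy : ∀ v : X, ∃ l : ℝ, Tendsto (fun k => ⟪u (φ k), v⟫) atTop (𝓝 l) := by
    intro v
    set P := Y.orthogonalProjection with hP
    have hproj : ∀ n, ⟪u n, v⟫ = ⟪u n, (P v : X)⟫ := by
      intro n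
      have horth : v - (P v : X) ∈ Yᗮ := Y.sub_starProjection_mem_orthogonal v
      have := (Submodule.mem_orthogonal Y (v - (P v : X))).1 horth (u n) (huY n)
      have hsplit : ⟪u n, v⟫ = ⟪u n, (P v : X)⟫ + ⟪u n, v - (P v : X)⟫ := by
        rw [← inner_add_right, add_sub_cancel]
      rw [hsplit, this, add_zero]
    have hyc : (P v : X) ∈ closure (range d) := by
      rw [← hd]; exact hcs (P v).2
    set y : X := (P v : X) with hy
    have hCs : CauchySeq (fun k => ⟪u (φ k), y⟫) := by
      rw [Metric.cauchySeq_iff]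
      intro ε hε
      have hC1 : (0:ℝ) < C + 1 := by linarith
      have hε3 : 0 < ε / (3 * (C + 1)) := by positivity
      obtain ⟨w, hw, hwd⟩ := Metric.mem_closure_iff.1 hyc _ hε3
      obtain ⟨m, hm⟩ := hw
      have hcs2 : CauchySeq (fun k => ⟪u (φ k), d m⟫) := (hdm m).cauchySeq
      obtain ⟨N, hN⟩ := Metric.cauchySeq_iff.1 hcs2 (ε / 3) (by linarith)
      refine ⟨N, fun k hk l hl => ?_⟩
      have key : ∀ j, |⟪u (φ j), y⟫ - ⟪u (φ j), d m⟫| ≤ C * (ε / (3 * (C + 1))) := by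
        intro j
        have : ⟪u (φ j), y⟫ - ⟪u (φ j), d m⟫ = ⟪u (φ j), y - d m⟫ := by
          rw [inner_sub_right]
        rw [this]
        have h1 : |⟪u (φ j), y - d m⟫| ≤ ‖u (φ j)‖ * ‖y - d m‖ := abs_real_inner_le_norm _ _
        have h2 : ‖y - d m‖ < ε / (3 * (C + 1)) := by
          rw [← dist_eq_norm, hm]
          exact hwd
        calc |⟪u (φ j), y - d m⟫| ≤ ‖u (φ j)‖ * ‖y - d m‖ := h1
          _ ≤ C * (ε / (3 * (C + 1))) := by
              apply mul_le_mul (hb _) h2.le (norm_nonneg _) hC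
      have hCe : C * (ε / (3 * (C + 1))) < ε / 3 := by
        have heq : C * (ε / (3 * (C + 1))) = C * ε / (3 * (C + 1)) := by ring
        rw [heq, div_lt_div_iff₀ (by positivity) (by norm_num)]
        nlinarith
      have hkl := hN k hk l hl
      rw [Real.dist_eq] at hkl ⊢
      have t1 := key k
      have t2 := key l
      have : |⟪u (φ k), y⟫ - ⟪u (φ l), y⟫| ≤
          |⟪u (φ k), y⟫ - ⟪u (φ k), d m⟫| + |⟪u (φ k), d m⟫ - ⟪u (φ l), d m⟫|
            + |⟪u (φ l), d m⟫ - ⟪u (φ l), y⟫| := by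
        have := abs_sub_abs_le_abs_sub (⟪u (φ k), y⟫) (⟪u (φ l), y⟫)
        calc |⟪u (φ k), y⟫ - ⟪u (φ l), y⟫|
            = |(⟪u (φ k), y⟫ - ⟪u (φ k), d m⟫) + (⟪u (φ k), d m⟫ - ⟪u (φ l), d m⟫)
              + (⟪u (φ l), d m⟫ - ⟪u (φ l), y⟫)| := by ring_nf
          _ ≤ _ := by
              apply le_trans (abs_add_le _ _)
              gcongr
              exact abs_add_le _ _
      have t3 : |⟪u (φ l), d m⟫ - ⟪u (φ l), y⟫| = |⟪u (φ l), y⟫ - ⟪u (φ l), d m⟫| :=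
        abs_sub_comm _ _
      rw [t3] at this
      linarith
    obtain ⟨l, hl⟩ := cauchySeq_tendsto_of_complete hCs
    refine ⟨l, ?_⟩
    have : (fun k => ⟪u (φ k), v⟫) = (fun k => ⟪u (φ k), y⟫) := by
      funext k; exact hproj (φ k)
    rw [this]; exact hl
  -- build the limit functional
  choose ℓ hℓ using hcauchy
  have hadd : ∀ v w : X, ℓ (v + w) = ℓ v + ℓ w := by
    intro v w
    refine tendsto_nhds_unique (hℓ (v + w)) ?_
    have : (fun k => ⟪u (φ k), v + w⟫) = fun k => ⟪u (φ k), v⟫ + ⟪u (φ k), w⟫ := by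
      funext k; rw [inner_add_right]
    rw [this]
    exact (hℓ v).add (hℓ w)
  have hsmul : ∀ (a : ℝ) (v : X), ℓ (a • v) = a * ℓ v := by
    intro a v
    refine tendsto_nhds_unique (hℓ (a • v)) ?_
    have : (fun k => ⟪u (φ k), a • v⟫) = fun k => a * ⟪u (φ k), v⟫ := by
      funext k; rw [real_inner_smul_right]
    rw [this]
    exact (hℓ v).const_mul a
  have hbound : ∀ v : X, ‖ℓ v‖ ≤ C * ‖v‖ := by
    intro v
    have : Tendsto (fun k => |⟪u (φ k), v⟫|) atTop (𝓝 |ℓ v|) := (hℓ v).abs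
    refine le_of_tendsto this (Eventually.of_forall fun k => ?_)
    exact le_trans (abs_real_inner_le_norm _ _)
      (mul_le_mul_of_nonneg_right (hb _) (norm_nonneg _))
  let lin : X →ₗ[ℝ] ℝ :=
    { toFun := ℓ, map_add' := hadd, map_smul' := hsmul }
  let L : X →L[ℝ] ℝ := lin.mkContinuous C hbound
  refine ⟨(InnerProductSpace.toDual ℝ X).symm L, φ, hφ, fun v => ?_⟩
  rw [InnerProductSpace.toDual_symm_apply]
  exact hℓ v

lemma exists_maximizer {X : Type*} [NormedAddCommGroup X] [InnerProductSpace ℝ X]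
    [CompleteSpace X] (J : X → ℝ)
    (husc : ∀ (x : X) (xn : ℕ → X),
      (∀ v : X, Tendsto (fun n => ⟪xn n, v⟫) atTop (nhds ⟪x, v⟫)) →
      limsup (fun n => J (xn n)) atTop ≤ J x)
    (r : ℝ) (hr : 0 < r) (Jmax : ℝ) (hJmax : ∀ y : X, ‖y‖ ^ 2 ≤ r → J y ≤ Jmax)
    (lam : ℝ) (hlam : 0 < lam) :
    ∃ x : X, ‖x‖ ^ 2 ≤ r ∧ ∀ y : X, ‖y‖ ^ 2 ≤ r →
      lam * J y - ‖y‖ ^ 2 / 2 ≤ lam * J x - ‖x‖ ^ 2 / 2 := by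
  set F : X → ℝ := fun y => lam * J y - ‖y‖ ^ 2 / 2 with hF
  set S : Set ℝ := F '' {y : X | ‖y‖ ^ 2 ≤ r} with hS
  have hSne : S.Nonempty := ⟨F 0, ⟨0, by simp [hr.le], rfl⟩⟩
  have hSbdd : BddAbove S := by
    refine ⟨lam * Jmax, ?_⟩
    rintro z ⟨y, hy, rfl⟩
    have h1 : J y ≤ Jmax := hJmax y hy
    have h2 : 0 ≤ ‖y‖ ^ 2 / 2 := by positivity
    have := mul_le_mul_of_nonneg_left h1 hlam.le
    simp only [hF]; linarith
  set M : ℝ := sSup S with hM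
  have hle : ∀ y : X, ‖y‖ ^ 2 ≤ r → F y ≤ M := fun y hy => le_csSup hSbdd ⟨y, hy, rfl⟩
  -- maximizing sequence
  have hseq : ∀ n : ℕ, ∃ y : X, ‖y‖ ^ 2 ≤ r ∧ M - 1 / (n + 1) < F y := by
    intro n
    have hlt : M - 1 / (n + 1 : ℝ) < M := by
      have : (0:ℝ) < 1 / (n + 1) := by positivity
      linarith
    obtain ⟨z, ⟨y, hy, rfl⟩, hz⟩ := exists_lt_of_lt_csSup hSne hlt
    exact ⟨y, hy, hz⟩
  choose yn hyn1 hyn2 using hseq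
  have hFtend : Tendsto (fun n => F (yn n)) atTop (𝓝 M) := by
    have h1 : Tendsto (fun n : ℕ => M - 1 / (n + 1 : ℝ)) atTop (𝓝 (M - 0)) :=
      tendsto_const_nhds.sub tendsto_one_div_add_atTop_nhds_zero_nat
    rw [sub_zero] at h1
    refine tendsto_of_tendsto_of_tendsto_of_le_of_le h1 tendsto_const_nhds
      (fun n => (hyn2 n).le) (fun n => hle (yn n) (hyn1 n))
  -- bounds on J (yn n)
  have hJlo : ∀ n, (M - 1) / lam ≤ J (yn n) := by
    intro n
    have h1 : M - 1 ≤ F (yn n) := by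
      have h01 : 1 / ((n:ℝ) + 1) ≤ 1 := by
        rw [div_le_one (by positivity)]; linarith [Nat.cast_nonneg (α := ℝ) n]
      have h0 : M - 1 ≤ M - 1 / ((n:ℝ) + 1) := by linarith
      exact (lt_of_le_of_lt h0 (hyn2 n)).le
    have h2 : F (yn n) ≤ lam * J (yn n) := by
      have : 0 ≤ ‖yn n‖ ^ 2 / 2 := by positivity
      simp only [hF]; linarith
    rw [div_le_iff₀ hlam, mul_comm]
    linarith
  -- Bolzano-Weierstrass on J values
  obtain ⟨L, hL, φ₁, hφ₁, hJtend⟩ :=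
    tendsto_subseq_of_bounded (x := fun n => J (yn n)) (Metric.isBounded_Icc ((M-1)/lam) Jmax)
      (fun n => ⟨hJlo n, hJmax _ (hyn1 n)⟩)
  -- BW on norms
  obtain ⟨N, hN, φ₂, hφ₂, hNtend⟩ :=
    tendsto_subseq_of_bounded (x := fun k => ‖yn (φ₁ k)‖ ^ 2) (Metric.isBounded_Icc 0 r)
      (fun k => ⟨by positivity, hyn1 _⟩)
  have hNIcc : N ∈ Icc (0:ℝ) r := by rwa [closure_Icc] at hN
  -- weak compactness
  have hnorm : ∀ k, ‖yn (φ₁ (φ₂ k))‖ ≤ Real.sqrt r := by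
    intro k
    rw [← Real.sqrt_sq (norm_nonneg _)]
    exact Real.sqrt_le_sqrt (hyn1 _)
  obtain ⟨x, φ₃, hφ₃, hweak⟩ := weak_seq_compact (Real.sqrt r) (fun k => yn (φ₁ (φ₂ k)))
    hnorm
  set ψ : ℕ → ℕ := fun k => φ₁ (φ₂ (φ₃ k)) with hψ
  have hweak' : ∀ v : X, Tendsto (fun k => ⟪yn (ψ k), v⟫) atTop (𝓝 ⟪x, v⟫) := hweak
  -- limits along ψ
  have hJψ : Tendsto (fun k => J (yn (ψ k))) atTop (𝓝 L) :=
    (hJtend.comp (hφ₂.tendsto_atTop.comp hφ₃.tendsto_atTop))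
  have hNψ : Tendsto (fun k => ‖yn (ψ k)‖ ^ 2) atTop (𝓝 N) :=
    hNtend.comp hφ₃.tendsto_atTop
  have hFψ : Tendsto (fun k => F (yn (ψ k))) atTop (𝓝 M) :=
    hFtend.comp ((hφ₁.comp (hφ₂.comp hφ₃)).tendsto_atTop)
  have hMeq : M = lam * L - N / 2 := by
    refine tendsto_nhds_unique hFψ ?_
    exact ((hJψ.const_mul lam).sub (hNψ.div_const 2))
  -- L ≤ J x
  have hLJ : L ≤ J x := by
    have := husc x (fun k => yn (ψ k)) hweak'
    rwa [hJψ.limsup_eq] at this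
  -- ‖x‖² ≤ N
  have hxN : ‖x‖ ^ 2 ≤ N := by
    have h1 : Tendsto (fun k => ⟪yn (ψ k), x⟫) atTop (𝓝 (‖x‖ ^ 2)) := by
      have := hweak' x
      rwa [real_inner_self_eq_norm_sq] at this
    have h2 : Tendsto (fun k => Real.sqrt (‖yn (ψ k)‖ ^ 2) * ‖x‖) atTop
        (𝓝 (Real.sqrt N * ‖x‖)) := (hNψ.sqrt).mul_const _
    have h3 : ‖x‖ ^ 2 ≤ Real.sqrt N * ‖x‖ := by
      refine le_of_tendsto_of_tendsto' h1 h2 (fun k => ?_)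
      rw [Real.sqrt_sq (norm_nonneg _)]
      exact le_trans (real_inner_le_norm _ _) (le_refl _)
    have h4 : ‖x‖ ≤ Real.sqrt N := by
      rcases eq_or_lt_of_le (norm_nonneg x) with h | h
      · rw [← h]; exact Real.sqrt_nonneg N
      · by_contra hcon
        push_neg at hcon
        have := mul_lt_mul_of_pos_right hcon h
        nlinarith
    calc ‖x‖ ^ 2 ≤ (Real.sqrt N) ^ 2 := by
          apply pow_le_pow_left₀ (norm_nonneg x) h4
      _ = N := Real.sq_sqrt hNIcc.1
  refine ⟨x, le_trans hxN hNIcc.2, fun y hy => ?_⟩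
  have : M ≤ F x := by
    rw [hMeq]
    have := mul_le_mul_of_nonneg_left hLJ hlam.le
    simp only [hF]
    linarith
  have h5 := hle y hy
  simp only [hF] at h5 this
  linarith

theorem stmt3 {X : Type*} [NormedAddCommGroup X] [InnerProductSpace ℝ X] [CompleteSpace X]
    (J : X → ℝ) (J' : X → X)
    (husc : ∀ (x : X) (xn : ℕ → X),
      (∀ v : X, Tendsto (fun n => ⟪xn n, v⟫) atTop (nhds ⟪x, v⟫)) →
      limsup (fun n => J (xn n)) atTop ≤ J x)
    (hgateaux : ∀ x v : X, HasDerivAt (fun s : ℝ => J (x + s • v)) ⟪J' x, v⟫ 0)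
    (hJ0 : J 0 = 0)
    (r : ℝ) (hr : 0 < r)
    (xhat : X) (hxhat : ‖xhat‖ ^ 2 ≤ r)
    (hmax : ∀ y : X, ‖y‖ ^ 2 ≤ r → J y ≤ J xhat)
    (hineq : ⟪J' xhat, xhat⟫ < 2 * J xhat) :
    ∃ p q : ℝ, 0 ≤ p ∧ p < q ∧ ∀ lam ∈ Ioo p q,
      ∃ x : X, x ≠ 0 ∧ ‖x‖ ^ 2 < r ∧ x = lam • J' x := by
  -- derivative of t ↦ J (t • xhat) at 1
  have hA : HasDerivAt (fun t : ℝ => J (t • xhat)) ⟪J' xhat, xhat⟫ 1 := by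
    have h := hgateaux xhat xhat
    have h2 := HasDerivAt.comp (1:ℝ) (by simpa using h) ((hasDerivAt_id (1:ℝ)).sub_const 1)
    have h3 : HasDerivAt (fun t : ℝ => J (xhat + (t - 1) • xhat)) (⟪J' xhat, xhat⟫ * 1) 1 := h2
    have heq : (fun t : ℝ => J (xhat + (t - 1) • xhat)) = fun t : ℝ => J (t • xhat) := by
      funext t
      congr 1
      rw [sub_smul, one_smul]
      abel
    rw [heq] at h3
    simpa using h3
  -- norm of smul squared
  have hns : ∀ (t : ℝ) (z : X), ‖t • z‖ ^ 2 = t ^ 2 * ‖z‖ ^ 2 := by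
    intro t z
    rw [norm_smul, Real.norm_eq_abs, mul_pow, sq_abs]
  -- J xhat > 0
  have hJ0hat : 0 ≤ J xhat := hJ0 ▸ hmax 0 (by simp [hr.le])
  have hJpos : 0 < J xhat := by
    rcases lt_or_eq_of_le hJ0hat with h | h
    · exact h
    · exfalso
      have hc : ⟪J' xhat, xhat⟫ < 0 := by rw [← h] at hineq; linarith
      obtain ⟨t, htI, ht⟩ := neg_deriv_lemma hA hc
      have hmem : ‖t • xhat‖ ^ 2 ≤ r := by
        rw [hns]
        have h1 : t ^ 2 ≤ 1 := by nlinarith [htI.1, htI.2]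
        nlinarith [sq_nonneg ‖xhat‖, hxhat]
      have := hmax (t • xhat) hmem
      simp only [one_smul] at ht
      linarith
  set lam0 : ℝ := r / (2 * J xhat) with hlam0def
  have hlam0 : 0 < lam0 := by positivity
  have hlam0eq : lam0 * (2 * J xhat) = r := div_mul_cancel₀ r (by positivity)
  clear_value lam0
  -- interior witness with positive value
  have hwitness : ∃ x₀ : X, ‖x₀‖ ^ 2 < r ∧ 0 < lam0 * J x₀ - ‖x₀‖ ^ 2 / 2 := by
    rcases lt_or_eq_of_le hxhat with hlt | heq
    · exact ⟨xhat, hlt, by nlinarith⟩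
    · -- boundary case
      have hfd : HasDerivAt (fun t : ℝ => lam0 * J (t • xhat) - t ^ 2 * (‖xhat‖ ^ 2 / 2))
          (lam0 * ⟪J' xhat, xhat⟫ - ‖xhat‖ ^ 2) 1 := by
        have h1 := hA.const_mul lam0
        have h2 : HasDerivAt (fun t : ℝ => t ^ 2 * (‖xhat‖ ^ 2 / 2)) (‖xhat‖ ^ 2) 1 := by
          have := (hasDerivAt_pow 2 (1:ℝ)).mul_const (‖xhat‖ ^ 2 / 2)
          exact this.congr_deriv (by push_cast; ring)
        exact h1.sub h2
      have hcneg : lam0 * ⟪J' xhat, xhat⟫ - ‖xhat‖ ^ 2 < 0 := by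
        have := mul_lt_mul_of_pos_left hineq hlam0
        rw [heq] at *
        nlinarith
      obtain ⟨t, htI, ht⟩ := neg_deriv_lemma hfd hcneg
      refine ⟨t • xhat, ?_, ?_⟩
      · rw [hns, heq]
        have h1 : t ^ 2 < 1 := by nlinarith [htI.1, htI.2]
        nlinarith [h1, hr]
      · have hval : lam0 * J xhat = r / 2 := by linarith [hlam0eq]
        simp only [one_smul] at ht
        rw [heq] at ht
        rw [hns, heq]
        nlinarith [ht, hval]
  obtain ⟨x₀, hx₀r, hx₀pos⟩ := hwitness
  set ε : ℝ := lam0 * J x₀ - ‖x₀‖ ^ 2 / 2 with hεdef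
  have hε : 0 < ε := hx₀pos
  clear_value ε
  set A : ℝ := J xhat + |J x₀| + 1 with hAdef
  have hApos : 0 < A := by positivity
  clear_value A
  have hAJ : |J x₀| ≤ A := by
    have := abs_nonneg (J x₀); simp only [hAdef]; linarith
  have hAJhat : J xhat < A := by
    have := abs_nonneg (J x₀); simp only [hAdef]; linarith
  set δ : ℝ := min (lam0 / 2) (ε / (2 * A)) with hδdef
  have hδpos : 0 < δ := lt_min (by linarith) (by positivity)
  have hδ1 : δ ≤ lam0 / 2 := min_le_left _ _
  have hδ2 : δ * A ≤ ε / 2 := by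
    have h := min_le_right (lam0 / 2) (ε / (2 * A))
    calc δ * A ≤ (ε / (2 * A)) * A := mul_le_mul_of_nonneg_right h hApos.le
      _ = ε / 2 := by field_simp
  clear_value δ
  refine ⟨lam0 - δ, lam0 + δ, by linarith, by linarith, ?_⟩
  intro lam hlamI
  have hlam_pos : 0 < lam := by
    have := hlamI.1; linarith
  -- maximizer for lam
  obtain ⟨x, hxr, hxmax⟩ := exists_maximizer J husc r hr (J xhat) hmax lam hlam_pos
  set ε' : ℝ := ε - δ * |J x₀| with hε'def
  clear_value ε'
  have hε'2 : ε / 2 ≤ ε' := by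
    have h9 : δ * |J x₀| ≤ δ * A := mul_le_mul_of_nonneg_left hAJ hδpos.le
    have h10 : δ * |J x₀| ≤ ε / 2 := le_trans h9 hδ2
    simp only [hε'def]
    linarith [h10]
  have hε'pos : 0 < ε' := by linarith
  -- value at witness
  have hwit : ε' ≤ lam * J x₀ - ‖x₀‖ ^ 2 / 2 := by
    have habs : |(lam - lam0) * J x₀| ≤ δ * |J x₀| := by
      rw [abs_mul]
      apply mul_le_mul_of_nonneg_right _ (abs_nonneg _)
      rw [abs_le]
      constructor
      · linarith [hlamI.1]
      · linarith [hlamI.2]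
    have h1 := neg_abs_le ((lam - lam0) * J x₀)
    have : lam * J x₀ - ‖x₀‖ ^ 2 / 2 = ε + (lam - lam0) * J x₀ := by
      simp only [hεdef]; ring
    rw [this]
    simp only [hε'def]
    linarith
  have hMx : ε' ≤ lam * J x - ‖x‖ ^ 2 / 2 := le_trans hwit (hxmax x₀ hx₀r.le)
  -- the maximizer is nonzero
  have hxne : x ≠ 0 := by
    intro h0
    rw [h0, hJ0] at hMx
    simp at hMx
    linarith
  -- the maximizer is interior
  have hxint : ‖x‖ ^ 2 < r := by
    have hJx : J x ≤ J xhat := hmax x hxr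
    have h1 : lam * J x ≤ lam * J xhat := mul_le_mul_of_nonneg_left hJx hlam_pos.le
    have h2 : lam * J xhat < (lam0 + δ) * J xhat :=
      mul_lt_mul_of_pos_right hlamI.2 hJpos
    have h3 : δ * J xhat < δ * A := mul_lt_mul_of_pos_left hAJhat hδpos
    -- ‖x‖^2/2 ≤ lam*J xhat - ε' < (lam0+δ)*J xhat - ε/2 ≤ r/2 + δ*J xhat - ε/2 < r/2
    nlinarith [hlam0eq, hδ2, hε'2, hMx]
  -- Euler equation
  have heuler : ∀ v : X, lam * ⟪J' x, v⟫ - ⟪x, v⟫ = 0 := by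
    intro v
    have hloc : IsLocalMax (fun s : ℝ => lam * J (x + s • v) - ‖x + s • v‖ ^ 2 / 2) 0 := by
      have hcont : Tendsto (fun s : ℝ => ‖x + s • v‖ ^ 2) (𝓝 0) (𝓝 (‖x + (0:ℝ) • v‖ ^ 2)) := by
        apply Continuous.tendsto
        exact ((continuous_const.add (((continuous_id : Continuous (fun s : ℝ => s)).smul continuous_const))).norm.pow 2)
      rw [show ‖x + (0:ℝ) • v‖ ^ 2 = ‖x‖ ^ 2 by simp] at hcont
      have hev : ∀ᶠ s : ℝ in 𝓝 0, ‖x + s • v‖ ^ 2 < r := hcont.eventually_lt_const hxint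
      filter_upwards [hev] with s hs
      have := hxmax (x + s • v) hs.le
      simpa using this
    have hder : HasDerivAt (fun s : ℝ => lam * J (x + s • v) - ‖x + s • v‖ ^ 2 / 2)
        (lam * ⟪J' x, v⟫ - ⟪x, v⟫) 0 := by
      have part1 := (hgateaux x v).const_mul lam
      have hc : HasDerivAt (fun s : ℝ => x + s • v) v 0 := by
        have := ((hasDerivAt_id (0:ℝ)).smul_const v).const_add x
        simpa using this
      have hi := HasDerivAt.inner ℝ hc hc
      have part2 : HasDerivAt (fun s : ℝ => ‖x + s • v‖ ^ 2 / 2) ⟪x, v⟫ 0 := by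
        have heq2 : (fun s : ℝ => ‖x + s • v‖ ^ 2 / 2)
            = fun s : ℝ => ⟪x + s • v, x + s • v⟫ / 2 := by
          funext s
          rw [real_inner_self_eq_norm_sq]
        rw [heq2]
        have := hi.div_const 2
        exact this.congr_deriv (by simp [real_inner_comm])
      exact part1.sub part2
    exact hloc.hasDerivAt_eq_zero hder
  have hsub : lam • J' x - x = 0 := by
    rw [← inner_self_eq_zero (𝕜 := ℝ)]
    rw [inner_sub_left, real_inner_smul_left]
    linarith [heuler (lam • J' x - x)]
  exact ⟨x, hxne, hxint, (sub_eq_zero.1 hsub).symm⟩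
end

section
/- Let f : [0,∞) → [0,∞) and α : [0,1] → (0,∞) be continuous with f(0) = 0, extend f by 0 on (−∞,0), and set F(ξ) = ∫₀^ξ f(t) dt. Assume that for some a > 0 the function ξ ↦ F(ξ)/ξ² is non-increasing on (0,a] and that for each b > 0 this function is not constant on (0,b]. Let u : [0,1] → ℝ be a continuous function with u(0) = u(1) = 0, admitting a weak derivative with ∫₀¹ |u'(t)|² dt ≤ a², and with sup_{[0,1]} u > 0. Then ∫₀¹ α(t) f(u(t)) u(t) dt < 2 ∫₀¹ α(t) F(u(t)) dt. -/
open Set MeasureTheory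

theorem stmt7
    (f α : ℝ → ℝ)
    (hf_cont : ContinuousOn f (Ici 0))
    (hf_zero : ∀ ξ ≤ (0:ℝ), f ξ = 0)
    (hf_nonneg : ∀ ξ : ℝ, 0 ≤ f ξ)
    (hα_cont : ContinuousOn α (Icc 0 1))
    (hα_pos : ∀ t ∈ Icc (0:ℝ) 1, 0 < α t)
    (F : ℝ → ℝ) (hF : ∀ ξ, F ξ = ∫ t in (0:ℝ)..ξ, f t)
    (a : ℝ) (ha : 0 < a)
    (hmono : ∀ ξ₁ ξ₂, 0 < ξ₁ → ξ₁ ≤ ξ₂ → ξ₂ ≤ a → F ξ₂ / ξ₂ ^ 2 ≤ F ξ₁ / ξ₁ ^ 2)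
    (hnotconst : ∀ b > (0:ℝ), ¬ ∃ c : ℝ, ∀ ξ ∈ Ioc (0:ℝ) b, F ξ / ξ ^ 2 = c)
    (u d : ℝ → ℝ)
    (hu_cont : ContinuousOn u (Icc 0 1))
    (hd_int : IntervalIntegrable d volume 0 1)
    (hd_sq : IntervalIntegrable (fun t => |d t| ^ 2) volume 0 1)
    (hud : ∀ x ∈ Icc (0:ℝ) 1, u x = ∫ t in (0:ℝ)..x, d t)
    (hu0 : u 0 = 0) (hu1 : u 1 = 0)
    (hnorm : (∫ t in (0:ℝ)..1, |d t| ^ 2) ≤ a ^ 2)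
    (hsup : ∃ t ∈ Icc (0:ℝ) 1, 0 < u t) :
    (∫ t in (0:ℝ)..1, α t * (f (u t) * u t)) < 2 * ∫ t in (0:ℝ)..1, α t * F (u t) := by
  -- f is continuous on all of ℝ
  have hf0 : f 0 = 0 := hf_zero 0 le_rfl
  have hfC : Continuous f := by
    have hfe : f = fun x => f (max x 0) := by
      funext x
      rcases le_or_gt x 0 with h | h
      · rw [max_eq_right h, hf_zero x h, hf0]
      · rw [max_eq_left h.le]
    rw [hfe]
    exact hf_cont.comp_continuous (continuous_id.max continuous_const)
      (fun x => mem_Ici.mpr (le_max_right _ _))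
  -- F has derivative f everywhere
  have hFfun : F = fun x => ∫ t in (0:ℝ)..x, f t := funext hF
  have hFd : ∀ ξ : ℝ, HasDerivAt F (f ξ) ξ := by
    intro ξ
    rw [hFfun]
    exact intervalIntegral.integral_hasDerivAt_right (hfC.intervalIntegrable _ _)
      (hfC.stronglyMeasurableAtFilter _ _) hfC.continuousAt
  have hFC : Continuous F := by
    have : Differentiable ℝ F := fun ξ => (hFd ξ).differentiableAt
    exact this.continuous
  -- F vanishes on nonpositive reals
  have hFneg : ∀ ξ ≤ (0:ℝ), F ξ = 0 := by
    intro ξ hξ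
    rw [hF]
    rw [intervalIntegral.integral_congr (g := fun _ => (0:ℝ))]
    · simp
    · intro x hx
      rw [uIcc_of_ge hξ] at hx
      exact hf_zero x hx.2
  -- bound : u t ≤ a on [0,1]
  have hua : ∀ t ∈ Icc (0:ℝ) 1, u t ≤ a := by
    intro t ht
    have hdw : ∀ s : ℝ, d s ≤ a / 2 + |d s| ^ 2 / (2 * a) := by
      intro s
      have h1 : d s ≤ |d s| := le_abs_self _
      have h2 : 0 ≤ (|d s| - a) ^ 2 := sq_nonneg _
      rw [div_add_div _ _ (by norm_num) (by positivity), le_div_iff₀ (by positivity)]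
      nlinarith
    have hw_int : IntervalIntegrable (fun s => a / 2 + |d s| ^ 2 / (2 * a)) volume 0 1 :=
      (intervalIntegrable_const).add (hd_sq.div_const _)
    have hd_sub : IntervalIntegrable d volume 0 t := by
      apply hd_int.mono_set
      rw [uIcc_of_le ht.1, uIcc_of_le (by norm_num : (0:ℝ) ≤ 1)]
      exact Icc_subset_Icc le_rfl ht.2
    have hw_sub : IntervalIntegrable (fun s => a / 2 + |d s| ^ 2 / (2 * a)) volume 0 t := by
      apply hw_int.mono_set
      rw [uIcc_of_le ht.1, uIcc_of_le (by norm_num : (0:ℝ) ≤ 1)]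
      exact Icc_subset_Icc le_rfl ht.2
    have hw_sub2 : IntervalIntegrable (fun s => a / 2 + |d s| ^ 2 / (2 * a)) volume t 1 := by
      apply hw_int.mono_set
      rw [uIcc_of_le ht.2, uIcc_of_le (by norm_num : (0:ℝ) ≤ 1)]
      exact Icc_subset_Icc ht.1 le_rfl
    have h1 : u t ≤ ∫ s in (0:ℝ)..t, (a / 2 + |d s| ^ 2 / (2 * a)) := by
      rw [hud t ht]
      exact intervalIntegral.integral_mono_on ht.1 hd_sub hw_sub (fun s _ => hdw s)
    have h2 : (∫ s in (0:ℝ)..t, (a / 2 + |d s| ^ 2 / (2 * a)))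
        ≤ ∫ s in (0:ℝ)..1, (a / 2 + |d s| ^ 2 / (2 * a)) := by
      have hadd := intervalIntegral.integral_add_adjacent_intervals hw_sub hw_sub2
      have h3 : 0 ≤ ∫ s in t..(1:ℝ), (a / 2 + |d s| ^ 2 / (2 * a)) :=
        intervalIntegral.integral_nonneg ht.2 (fun s _ => by positivity)
      linarith
    have h4 : (∫ s in (0:ℝ)..1, (a / 2 + |d s| ^ 2 / (2 * a))) ≤ a := by
      rw [intervalIntegral.integral_add (intervalIntegrable_const) (hd_sq.div_const _),
        intervalIntegral.integral_const, intervalIntegral.integral_div]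
      have : (∫ s in (0:ℝ)..1, |d s| ^ 2) / (2 * a) ≤ a ^ 2 / (2 * a) := by
        apply div_le_div_of_nonneg_right hnorm (by positivity) |>.trans_eq rfl
      have ha2 : a ^ 2 / (2 * a) = a / 2 := by field_simp
      simp only [smul_eq_mul, sub_zero, one_mul]
      linarith [this, ha2 ▸ this]
    linarith
  -- key pointwise inequality on the open interval
  have keyIoo : ∀ ξ ∈ Ioo (0:ℝ) a, f ξ * ξ ≤ 2 * F ξ := by
    intro ξ hξ
    have hξ0 : (0:ℝ) < ξ := hξ.1
    have hne : (ξ:ℝ) ^ 2 ≠ 0 := pow_ne_zero _ hξ0.ne'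
    have hG : HasDerivAt (fun x => F x / x ^ 2)
        ((f ξ * ξ ^ 2 - F ξ * ((2:ℕ) * ξ ^ (2 - 1))) / (ξ ^ 2) ^ 2) ξ :=
      (hFd ξ).div (hasDerivAt_pow 2 ξ) hne
    have hslope := hasDerivAt_iff_tendsto_slope.mp hG
    have T : Filter.Tendsto (slope (fun x => F x / x ^ 2) ξ) (nhdsWithin ξ (Ioi ξ))
        (nhds ((f ξ * ξ ^ 2 - F ξ * ((2:ℕ) * ξ ^ (2 - 1))) / (ξ ^ 2) ^ 2)) :=
      hslope.mono_left (nhdsWithin_mono ξ (fun y hy => ne_of_gt hy))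
    have hev : ∀ᶠ y in nhdsWithin ξ (Ioi ξ),
        slope (fun x => F x / x ^ 2) ξ y ≤ 0 := by
      filter_upwards [nhdsWithin_le_nhds (Iio_mem_nhds hξ.2), self_mem_nhdsWithin]
        with y hy1 hy2
      have hGle : F y / y ^ 2 ≤ F ξ / ξ ^ 2 :=
        hmono ξ y hξ0 (le_of_lt hy2) (le_of_lt hy1)
      rw [slope_def_field]
      apply div_nonpos_of_nonpos_of_nonneg
      · linarith
      · have : ξ < y := hy2
        linarith
    have hD : (f ξ * ξ ^ 2 - F ξ * ((2:ℕ) * ξ ^ (2 - 1))) / (ξ ^ 2) ^ 2 ≤ 0 :=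
      le_of_tendsto T hev
    have hnum : f ξ * ξ ^ 2 - F ξ * (2 * ξ) ≤ 0 := by
      have h4 : (0:ℝ) < (ξ ^ 2) ^ 2 := by positivity
      have h5 : f ξ * ξ ^ 2 - F ξ * ((2:ℕ) * ξ ^ (2 - 1)) ≤ 0 := by
        have := (div_le_iff₀ h4).mp hD
        linarith
      norm_num at h5
      linarith
    nlinarith
  -- key pointwise inequality including the right endpoint
  have key : ∀ ξ ∈ Ioc (0:ℝ) a, f ξ * ξ ≤ 2 * F ξ := by
    intro ξ hξ
    rcases lt_or_eq_of_le hξ.2 with h | h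
    · exact keyIoo ξ ⟨hξ.1, h⟩
    · subst h
      have hc : Continuous (fun x => 2 * F x - f x * x) := (continuous_const.mul hFC).sub (hfC.mul continuous_id)
      have hT : Filter.Tendsto (fun x => 2 * F x - f x * x) (nhdsWithin ξ (Iio ξ))
          (nhds (2 * F ξ - f ξ * ξ)) :=
        (hc.tendsto ξ).mono_left nhdsWithin_le_nhds
      have hev : ∀ᶠ x in nhdsWithin ξ (Iio ξ), 0 ≤ 2 * F x - f x * x := by
        filter_upwards [nhdsWithin_le_nhds (Ioi_mem_nhds hξ.1), self_mem_nhdsWithin]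
          with x hx1 hx2
        have := keyIoo x ⟨hx1, hx2⟩
        linarith
      have := ge_of_tendsto hT hev
      linarith
  -- choose a point where u is positive
  obtain ⟨tstar, htstar, hustar⟩ := hsup
  set m := u tstar with hm
  have hm0 : 0 < m := hustar
  have hma : m ≤ a := hua tstar htstar
  -- G is not constant on (0, m]
  have hGm : ∃ ξ₁ ∈ Ioc (0:ℝ) m, F m / m ^ 2 < F ξ₁ / ξ₁ ^ 2 ∧ ξ₁ < m := by
    have h := hnotconst m hm0
    push_neg at h
    obtain ⟨ξ₁, hξ₁, hne⟩ := h (F m / m ^ 2)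
    have hle : F m / m ^ 2 ≤ F ξ₁ / ξ₁ ^ 2 := hmono ξ₁ m hξ₁.1 hξ₁.2 hma
    have hlt : F m / m ^ 2 < F ξ₁ / ξ₁ ^ 2 := lt_of_le_of_ne hle (Ne.symm hne)
    have hξ₁m : ξ₁ < m := by
      rcases lt_or_eq_of_le hξ₁.2 with h' | h'
      · exact h'
      · exfalso; rw [h'] at hlt; exact lt_irrefl _ hlt
    exact ⟨ξ₁, hξ₁, hlt, hξ₁m⟩
  obtain ⟨ξ₁, hξ₁, hGlt, hξ₁m⟩ := hGm
  -- find a point where the inequality is strict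
  have hstrict : ∃ ξ₀ ∈ Icc ξ₁ m, f ξ₀ * ξ₀ < 2 * F ξ₀ := by
    by_contra hcon
    push_neg at hcon
    have heq : ∀ x ∈ Icc ξ₁ m, f x * x = 2 * F x := by
      intro x hx
      have h1 : x ∈ Ioc (0:ℝ) a := ⟨lt_of_lt_of_le hξ₁.1 hx.1, le_trans hx.2 hma⟩
      exact le_antisymm (key x h1) (hcon x hx)
    have hmonoG : MonotoneOn (fun x => F x / x ^ 2) (Icc ξ₁ m) := by
      apply monotoneOn_of_deriv_nonneg (convex_Icc _ _)
      · exact (hFC.continuousOn).div (continuous_pow 2).continuousOn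
          (fun x hx => pow_ne_zero 2 (ne_of_gt (lt_of_lt_of_le hξ₁.1 hx.1)))
      · intro x hx
        rw [interior_Icc] at hx
        have hx0 : (0:ℝ) < x := lt_trans hξ₁.1 hx.1
        exact (((hFd x).div (hasDerivAt_pow 2 x)
          (pow_ne_zero _ hx0.ne')).differentiableAt).differentiableWithinAt
      · intro x hx
        rw [interior_Icc] at hx
        have hx0 : (0:ℝ) < x := lt_trans hξ₁.1 hx.1
        have hd' : HasDerivAt (fun x => F x / x ^ 2)
            ((f x * x ^ 2 - F x * ((2:ℕ) * x ^ (2 - 1))) / (x ^ 2) ^ 2) x :=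
          (hFd x).div (hasDerivAt_pow 2 x) (pow_ne_zero _ hx0.ne')
        rw [hd'.deriv]
        have hfx : f x * x = 2 * F x := heq x ⟨hx.1.le, hx.2.le⟩
        have : f x * x ^ 2 - F x * ((2:ℕ) * x ^ (2 - 1)) = 0 := by
          push_cast
          nlinarith
        rw [this]
        simp
    have := hmonoG ⟨le_rfl, hξ₁m.le⟩ ⟨hξ₁m.le, le_rfl⟩ hξ₁m.le
    simp only at this
    linarith
  obtain ⟨ξ₀, hξ₀mem, hξ₀⟩ := hstrict
  have hξ₀pos : 0 < ξ₀ := lt_of_lt_of_le hξ₁.1 hξ₀mem.1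
  -- find t₀ with u t₀ = ξ₀ by the intermediate value theorem
  have htstar01 : tstar ∈ Icc (0:ℝ) 1 := htstar
  have hIVT : ∃ t₀ ∈ Icc (0:ℝ) tstar, u t₀ = ξ₀ := by
    have hsub : Icc (0:ℝ) tstar ⊆ Icc (0:ℝ) 1 := Icc_subset_Icc le_rfl htstar01.2
    have := intermediate_value_Icc htstar01.1 (hu_cont.mono hsub)
    have hmem : ξ₀ ∈ Icc (u 0) (u tstar) := by
      rw [hu0]
      exact ⟨hξ₀pos.le, le_trans hξ₀mem.2 le_rfl⟩
    obtain ⟨t₀, ht₀, hut₀⟩ := this hmem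
    exact ⟨t₀, ht₀, hut₀⟩
  obtain ⟨t₀, ht₀mem, hut₀⟩ := hIVT
  have ht₀01 : t₀ ∈ Icc (0:ℝ) 1 := ⟨ht₀mem.1, le_trans ht₀mem.2 htstar01.2⟩
  have ht₀0 : 0 < t₀ := by
    rcases lt_or_eq_of_le ht₀mem.1 with h | h
    · exact h
    · exfalso; rw [← h] at hut₀; rw [hu0] at hut₀; linarith
  have ht₀1 : t₀ < 1 := by
    rcases lt_or_eq_of_le ht₀01.2 with h | h
    · exact h
    · exfalso; rw [h, hu1] at hut₀; linarith
  -- the comparison function g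
  set g : ℝ → ℝ := fun t => α t * (2 * F (u t) - f (u t) * u t) with hg
  have hginner_cont : Continuous (fun x => 2 * F x - f x * x) := (continuous_const.mul hFC).sub (hfC.mul continuous_id)
  have hgcont : ContinuousOn g (Icc 0 1) :=
    hα_cont.mul (hginner_cont.comp_continuousOn hu_cont)
  have hgnonneg : ∀ t ∈ Icc (0:ℝ) 1, 0 ≤ g t := by
    intro t ht
    apply mul_nonneg (hα_pos t ht).le
    rcases le_or_gt (u t) 0 with h | h
    · rw [hf_zero _ h, hFneg _ h]
      simp
    · have := key (u t) ⟨h, hua t ht⟩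
      linarith
  have hgt₀ : 0 < g t₀ := by
    apply mul_pos (hα_pos t₀ ht₀01)
    rw [hut₀]
    linarith
  -- find a subinterval around t₀ where g is positive
  have hgat : ContinuousAt g t₀ :=
    hgcont.continuousAt (Icc_mem_nhds ht₀0 ht₀1)
  have hev : ∀ᶠ x in nhds t₀, 0 < g x ∧ x ∈ Ioo (0:ℝ) 1 := by
    have h1 : ∀ᶠ x in nhds t₀, 0 < g x := hgat.eventually (eventually_gt_nhds hgt₀)
    have h2 : ∀ᶠ x in nhds t₀, x ∈ Ioo (0:ℝ) 1 :=
      Filter.eventually_of_mem (isOpen_Ioo.mem_nhds ⟨ht₀0, ht₀1⟩) (fun x hx => hx)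
    exact h1.and h2
  obtain ⟨c, e, hce, hsub⟩ := mem_nhds_iff_exists_Ioo_subset.mp hev
  set c' := max c 0 with hc'
  set e' := min e 1 with he'
  have hc'lt : c' < t₀ := max_lt hce.1 ht₀0
  have he'gt : t₀ < e' := lt_min hce.2 ht₀1
  have hc'e' : c' < e' := lt_trans hc'lt he'gt
  have hc'0 : 0 ≤ c' := le_max_right _ _
  have he'1 : e' ≤ 1 := min_le_right _ _
  have hsub' : Ioo c' e' ⊆ Ioo c e :=
    Ioo_subset_Ioo (le_max_left _ _) (min_le_left _ _)
  -- integrability of g on subintervals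
  have hgint : ∀ p q : ℝ, 0 ≤ p → q ≤ 1 → p ≤ q → IntervalIntegrable g volume p q := by
    intro p q hp hq hpq
    apply ContinuousOn.intervalIntegrable
    apply hgcont.mono
    rw [uIcc_of_le hpq]
    exact Icc_subset_Icc hp hq
  -- positivity of the integral of g
  have hpos : 0 < ∫ t in (0:ℝ)..1, g t := by
    have i1 : IntervalIntegrable g volume 0 c' := hgint 0 c' le_rfl (le_trans hc'lt.le (le_trans he'gt.le he'1)) hc'0
    have i2 : IntervalIntegrable g volume c' e' := hgint c' e' hc'0 he'1 hc'e'.le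
    have i3 : IntervalIntegrable g volume e' 1 := hgint e' 1 (le_trans hc'0 hc'e'.le) le_rfl he'1
    have hadd1 := intervalIntegral.integral_add_adjacent_intervals i1 i2
    have hadd2 := intervalIntegral.integral_add_adjacent_intervals (i1.trans i2) i3
    have hn1 : 0 ≤ ∫ t in (0:ℝ)..c', g t :=
      intervalIntegral.integral_nonneg hc'0
        (fun t ht => hgnonneg t ⟨ht.1, le_trans ht.2 (le_trans hc'e'.le he'1)⟩)
    have hn3 : 0 ≤ ∫ t in e'..(1:ℝ), g t :=
      intervalIntegral.integral_nonneg he'1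
        (fun t ht => hgnonneg t ⟨le_trans (le_trans hc'0 hc'e'.le) ht.1, ht.2⟩)
    have hmid : 0 < ∫ t in c'..e', g t := by
      apply intervalIntegral.intervalIntegral_pos_of_pos_on i2 _ hc'e'
      intro x hx
      exact (hsub (hsub' hx)).1
    calc (0:ℝ) < ∫ t in c'..e', g t := hmid
      _ ≤ (∫ t in (0:ℝ)..c', g t) + ∫ t in c'..e', g t := by linarith
      _ = ∫ t in (0:ℝ)..e', g t := hadd1
      _ ≤ (∫ t in (0:ℝ)..e', g t) + ∫ t in e'..(1:ℝ), g t := by linarith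
      _ = ∫ t in (0:ℝ)..1, g t := hadd2
  -- assemble the final inequality
  have hint1 : IntervalIntegrable (fun t => α t * (f (u t) * u t)) volume 0 1 := by
    apply ContinuousOn.intervalIntegrable
    rw [uIcc_of_le (by norm_num : (0:ℝ) ≤ 1)]
    exact hα_cont.mul (((hfC.comp_continuousOn hu_cont).mul hu_cont))
  have hint2 : IntervalIntegrable (fun t => α t * F (u t)) volume 0 1 := by
    apply ContinuousOn.intervalIntegrable
    rw [uIcc_of_le (by norm_num : (0:ℝ) ≤ 1)]
    exact hα_cont.mul (hFC.comp_continuousOn hu_cont)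
  have hsplit : (∫ t in (0:ℝ)..1, g t)
      = 2 * (∫ t in (0:ℝ)..1, α t * F (u t)) - ∫ t in (0:ℝ)..1, α t * (f (u t) * u t) := by
    have : (∫ t in (0:ℝ)..1, g t)
        = ∫ t in (0:ℝ)..1, (2 * (α t * F (u t)) - α t * (f (u t) * u t)) := by
      apply intervalIntegral.integral_congr
      intro t _
      simp only [hg]
      ring
    rw [this, intervalIntegral.integral_sub (hint2.const_mul 2) hint1,
      intervalIntegral.integral_const_mul]
  linarith [hpos, hsplit]
end
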